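/- If γ is a path in the Rauzy diagram with involution from π to π', then B_γ · v_π = v_{π'}, where v_π = Σ_{π(x)<π(*)} e_{x̲} − Σ_{π(x)>π(*)} e_{x̲}; moreover (B_γ*)^{-1}·(v_π/⟨v_π,v_π⟩) − v_{π'}/⟨v_{π'},v_{π'}⟩ lies in S_{π'}. -/

import Mathlib

open Finset

namespace Rauzy

/-- The alphabet with `2*d` letters. -/
abbrev Letter (d : ℕ) := Fin (2*d)
/-- Positions `1, …, 2d+1` (0-indexed). -/
abbrev Pos (d : ℕ) := Fin (2*d+1)
/-- Combinatorial data: a bijection from `A ∪ {*}` (with `none = *`) to positions. -/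
abbrev RPerm (d : ℕ) := Option (Letter d) ≃ Pos d

/-- A fixed-point-free involution of the alphabet. -/
structure Inv (d : ℕ) where
  i : Letter d → Letter d
  invol : ∀ a, i (i a) = a
  nofix : ∀ a, i a ≠ a

variable {d : ℕ}

/-- Admissibility: neither `i(A_l) ⊆ A_r` nor `i(A_r) ⊆ A_l`. -/
def Admissible (I : Inv d) (π : RPerm d) : Prop :=
  ¬ (∀ a : Letter d, π (some a) < π none → π none < π (some (I.i a))) ∧
  ¬ (∀ a : Letter d, π none < π (some a) → π (some (I.i a)) < π none)

/-- A vector indexed by letters represents a vector indexed by involution classes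
iff it is symmetric under the involution. -/
def Sym (I : Inv d) (v : Letter d → ℝ) : Prop := ∀ a, v (I.i a) = v a

/-- The balance condition defining the hyperplane `S_π`. -/
def Balanced (π : RPerm d) (v : Letter d → ℝ) : Prop :=
  ∑ a ∈ univ.filter (fun a => π (some a) < π none), v a
    = ∑ a ∈ univ.filter (fun a => π none < π (some a)), v a

def Positive (v : Letter d → ℝ) : Prop := ∀ a, 0 < v a

/-- Membership in `S_π` (as a vector in `ℝ^{A/i}`, in letter coordinates). -/
def MemS (I : Inv d) (π : RPerm d) (v : Letter d → ℝ) : Prop := Sym I v ∧ Balanced π v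

/-- The open cone `Θ_π` of admissible suspension data. -/
def MemTheta (I : Inv d) (π : RPerm d) (τ : Letter d → ℝ) : Prop :=
  MemS I π τ ∧
  (∀ k : Pos d, π none < k → (k : ℕ) < 2*d →
    0 < ∑ a ∈ univ.filter (fun a => π none < π (some a) ∧ π (some a) ≤ k), τ a) ∧
  (∀ k : Pos d, 0 < (k : ℕ) → k < π none →
    ∑ a ∈ univ.filter (fun a => k ≤ π (some a) ∧ π (some a) < π none), τ a < 0)

/-- The cone `Θ'_π`: non-strict inequalities, excluding `0`. -/
def MemTheta' (I : Inv d) (π : RPerm d) (τ : Letter d → ℝ) : Prop :=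
  MemS I π τ ∧ τ ≠ 0 ∧
  (∀ k : Pos d, π none < k → (k : ℕ) < 2*d →
    0 ≤ ∑ a ∈ univ.filter (fun a => π none < π (some a) ∧ π (some a) ≤ k), τ a) ∧
  (∀ k : Pos d, 0 < (k : ℕ) → k < π none →
    ∑ a ∈ univ.filter (fun a => k ≤ π (some a) ∧ π (some a) < π none), τ a ≤ 0)

/-- The linear operator `Ω(π)` applied to a vector:
`(Ω(π)·v)_α = Σ_{π(ξ)>π(i(α))} v_ξ − Σ_{π(ξ)<π(α)} v_ξ`. -/
def omegaApply (I : Inv d) (π : RPerm d) (v : Letter d → ℝ) (a : Letter d) : ℝ :=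
  (∑ x ∈ univ.filter (fun x => π (some (I.i a)) < π (some x)), v x)
  - ∑ x ∈ univ.filter (fun x => π (some x) < π (some a)), v x

/-- The left operation: the rightmost letter `β` is inserted immediately after `i(α)`,
where `α` is the leftmost letter; both permutations are admissible. -/
def LeftOpTo (I : Inv d) (π π' : RPerm d) : Prop :=
  Admissible I π ∧ Admissible I π' ∧
  ∃ α β : Letter d, π (some α) = 0 ∧ π (some β) = Fin.last (2*d) ∧ β ≠ I.i α ∧
    (∀ x, π x ≤ π (some (I.i α)) → π' x = π x) ∧
    ((π' (some β) : ℕ) = (π (some (I.i α)) : ℕ) + 1) ∧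
    (∀ x, x ≠ some β → π (some (I.i α)) < π x → (π' x : ℕ) = (π x : ℕ) + 1)

/-- The right operation: the leftmost letter `α` is inserted immediately before `i(β)`,
where `β` is the rightmost letter; both permutations are admissible. -/
def RightOpTo (I : Inv d) (π π' : RPerm d) : Prop :=
  Admissible I π ∧ Admissible I π' ∧
  ∃ α β : Letter d, π (some α) = 0 ∧ π (some β) = Fin.last (2*d) ∧ α ≠ I.i β ∧
    (∀ x, π (some (I.i β)) ≤ π x → π' x = π x) ∧
    ((π' (some α) : ℕ) + 1 = (π (some (I.i β)) : ℕ)) ∧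
    (∀ x, x ≠ some α → π x < π (some (I.i β)) → (π' x : ℕ) + 1 = (π x : ℕ))

/-- An arrow of the Rauzy diagram with involution, with its winner and loser. -/
structure Arrow (d : ℕ) (I : Inv d) where
  src : RPerm d
  dst : RPerm d
  winner : Letter d
  loser : Letter d
  ok : (LeftOpTo I src dst ∧ src (some winner) = 0 ∧ src (some loser) = Fin.last (2*d))
     ∨ (RightOpTo I src dst ∧ src (some loser) = 0 ∧ src (some winner) = Fin.last (2*d))

/-- A list of arrows is a path if consecutive arrows match. -/
def IsPathList (I : Inv d) (l : List (Arrow d I)) : Prop :=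
  l.Chain' (fun a b => a.dst = b.src)

/-- `B_γ` for an arrow `γ`: `B·e_ξ̲ = e_ξ̲` for `ξ̲ ≠ α̲` and `B·e_α̲ = e_α̲ + e_β̲`
(winner `α`, loser `β`), acting on vectors in letter coordinates. -/
def arrowB (I : Inv d) (a : Arrow d I) (v : Letter d → ℝ) : Letter d → ℝ :=
  fun x => v x + (if x = a.loser ∨ x = I.i a.loser then v a.winner else 0)

/-- The transpose `B*_γ` for an arrow `γ`. -/
def arrowBt (I : Inv d) (a : Arrow d I) (v : Letter d → ℝ) : Letter d → ℝ :=
  fun x => v x + (if x = a.winner ∨ x = I.i a.winner then v a.loser else 0)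

/-- The inverse transpose `(B*_γ)⁻¹` for an arrow `γ`. -/
def arrowBtInv (I : Inv d) (a : Arrow d I) (v : Letter d → ℝ) : Letter d → ℝ :=
  fun x => v x - (if x = a.winner ∨ x = I.i a.winner then v a.loser else 0)

/-- `B_γ = B_{γ_n} ⋯ B_{γ_1}` for a path `γ = γ_1 … γ_n`. -/
def pathB (I : Inv d) (l : List (Arrow d I)) (v : Letter d → ℝ) : Letter d → ℝ :=
  l.foldl (fun w a => arrowB I a w) v

/-- `B*_γ = B*_{γ_1} ⋯ B*_{γ_n}`. -/
def pathBt (I : Inv d) (l : List (Arrow d I)) (v : Letter d → ℝ) : Letter d → ℝ :=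
  l.foldr (fun a w => arrowBt I a w) v

/-- `(B*_γ)⁻¹ = (B*_{γ_n})⁻¹ ⋯ (B*_{γ_1})⁻¹`. -/
def pathBtInv (I : Inv d) (l : List (Arrow d I)) (v : Letter d → ℝ) : Letter d → ℝ :=
  l.foldl (fun w a => arrowBtInv I a w) v

/-- The canonical basis vector of `ℝ^{A/i}` for the class of `y`, in letter coordinates. -/
def classBasis (I : Inv d) (y : Letter d) : Letter d → ℝ :=
  fun x => if x = y ∨ x = I.i y then 1 else 0

/-- A path is positive if all the entries of the matrix `B_γ` (over classes) are positive. -/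
def PositivePath (I : Inv d) (l : List (Arrow d I)) : Prop :=
  ∀ x y : Letter d, 0 < pathB I l (classBasis I y) x

/-- A path is complete if every involution class is the winner of some arrow. -/
def CompletePath (I : Inv d) (l : List (Arrow d I)) : Prop :=
  ∀ x : Letter d, ∃ a ∈ l, a.winner = x ∨ a.winner = I.i x

/-- A `k`-complete path is a concatenation of `k` complete paths. -/
def KComplete (I : Inv d) (k : ℕ) (l : List (Arrow d I)) : Prop :=
  ∃ ls : List (List (Arrow d I)), ls.length = k ∧ l = ls.flatten ∧ ∀ s ∈ ls, CompletePath I s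

/-- Invariance of a set of permutations under the left and right operations. -/
def OpInvariant (I : Inv d) (R : Set (RPerm d)) : Prop :=
  ∀ π ∈ R, ∀ π', (LeftOpTo I π π' ∨ RightOpTo I π π') → π' ∈ R

/-- A Rauzy class with involution: a minimal nonempty invariant set of admissible
permutations in which every involution class wins some arrow. -/
def IsRauzyClass (I : Inv d) (R : Set (RPerm d)) : Prop :=
  R.Nonempty ∧ (∀ π ∈ R, Admissible I π) ∧ OpInvariant I R ∧
  (∀ R' ⊆ R, R'.Nonempty → OpInvariant I R' → R' = R) ∧
  (∀ x : Letter d, ∃ a : Arrow d I, a.src ∈ R ∧ a.dst ∈ R ∧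
    (a.winner = x ∨ a.winner = I.i x))

/-- A permutation is irreducible if it belongs to a Rauzy class with involution. -/
def Irreducible (I : Inv d) (π : RPerm d) : Prop :=
  ∃ R, IsRauzyClass I R ∧ π ∈ R

/-- The vector `v_π = Σ_{π(x)<π(*)} e_x̲ − Σ_{π(x)>π(*)} e_x̲`, in letter coordinates. -/
def vpi (I : Inv d) (π : RPerm d) (x : Letter d) : ℝ :=
  (if π (some x) < π none then 1 else -1) + (if π (some (I.i x)) < π none then 1 else -1)


section Aux

variable {d : ℕ}

lemma Inv.iinj (I : Inv d) : Function.Injective I.i :=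
  Function.LeftInverse.injective I.invol

lemma vpi_sym (I : Inv d) (π : RPerm d) (x : Letter d) :
    vpi I π (I.i x) = vpi I π x := by
  unfold vpi; rw [I.invol]; ring

lemma arrow_src_adm (I : Inv d) (a : Arrow d I) : Admissible I a.src := by
  rcases a.ok with ⟨⟨h, _⟩, _, _⟩ | ⟨⟨h, _⟩, _, _⟩ <;> exact h

lemma arrow_dst_adm (I : Inv d) (a : Arrow d I) : Admissible I a.dst := by
  rcases a.ok with ⟨⟨_, h, _⟩, _, _⟩ | ⟨⟨_, h, _⟩, _, _⟩ <;> exact h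

lemma winner_ne (I : Inv d) (a : Arrow d I) :
    a.winner ≠ a.loser ∧ a.winner ≠ I.i a.loser ∧
      I.i a.winner ≠ a.loser ∧ I.i a.winner ≠ I.i a.loser := by
  have hd : 0 < 2 * d := lt_of_le_of_lt (Nat.zero_le _) a.winner.isLt
  have h0l : (0 : Pos d) ≠ Fin.last (2*d) := by
    intro h
    have := congrArg Fin.val h
    simp [Fin.val_last] at this
    omega
  rcases a.ok with ⟨⟨_, _, α, β, hα0, hβl, hβiα, _, _, _⟩, hw, hl⟩ |
                   ⟨⟨_, _, α, β, hα0, hβl, hαiβ, _, _, _⟩, hl, hw⟩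
  · have hwa : a.winner = α := Option.some.inj (a.src.injective (hw.trans hα0.symm))
    have hla : a.loser = β := Option.some.inj (a.src.injective (hl.trans hβl.symm))
    have hwl : a.winner ≠ a.loser := by
      intro h; apply h0l; rw [← hw, ← hl, h]
    have hwil : a.winner ≠ I.i a.loser := by
      rw [hwa, hla]; intro h
      exact hβiα (by rw [h, I.invol])
    refine ⟨hwl, hwil, ?_, fun h => hwl (I.iinj h)⟩
    rw [hwa, hla]; intro h; exact hβiα h.symm
  · have hwa : a.winner = β := Option.some.inj (a.src.injective (hw.trans hβl.symm))
    have hla : a.loser = α := Option.some.inj (a.src.injective (hl.trans hα0.symm))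
    have hwl : a.winner ≠ a.loser := by
      intro h; apply h0l; rw [← hw, ← hl, h]
    have hwil : a.winner ≠ I.i a.loser := by
      rw [hwa, hla]; intro h
      exact hαiβ ((congrArg I.i h).trans (I.invol α)).symm
    refine ⟨hwl, hwil, ?_, fun h => hwl (I.iinj h)⟩
    rw [hwa, hla]; intro h; exact hαiβ h.symm

lemma sym_arrowBtInv (I : Inv d) (a : Arrow d I) {v : Letter d → ℝ} (hv : Sym I v) :
    Sym I (arrowBtInv I a v) := by
  intro x
  unfold arrowBtInv
  rw [hv]
  congr 1
  have : (I.i x = a.winner ∨ I.i x = I.i a.winner) ↔ (x = a.winner ∨ x = I.i a.winner) := by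
    constructor
    · rintro (h | h)
      · exact Or.inr (by rw [← h, I.invol])
      · exact Or.inl (I.iinj h)
    · rintro (h | h)
      · exact Or.inr (by rw [h])
      · exact Or.inl (by rw [h, I.invol])
  simp only [this]

lemma sym_pathBtInv (I : Inv d) (l : List (Arrow d I)) {v : Letter d → ℝ} (hv : Sym I v) :
    Sym I (pathBtInv I l v) := by
  induction l generalizing v with
  | nil => exact hv
  | cons a rest ih => exact ih (sym_arrowBtInv I a hv)

lemma arrowB_vpi (I : Inv d) (a : Arrow d I) :
    arrowB I a (vpi I a.src) = vpi I a.dst := by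
  rcases a.ok with ⟨⟨_, _, α, β, hα0, hβl, hβiα, h4, h5, h6⟩, hw, hl⟩ |
                   ⟨⟨_, _, α, β, hα0, hβl, hαiβ, h4, h5, h6⟩, hl, hw⟩
  · -- left operation: winner α at 0, loser β at last
    set π := a.src with hπdef
    set π' := a.dst with hπ'def
    have hwa : a.winner = α := Option.some.inj (π.injective (hw.trans hα0.symm))
    have hla : a.loser = β := Option.some.inj (π.injective (hl.trans hβl.symm))
    have hstar0 : (π none : ℕ) ≠ 0 := by
      intro h
      have : π none = π (some α) := by rw [hα0]; exact Fin.ext (by simpa using h)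
      simpa using π.injective this
    have hstarlast : (π none : ℕ) ≠ 2*d := by
      intro h
      have : π none = π (some β) := by rw [hβl]; exact Fin.ext (by simpa using h)
      simpa using π.injective this
    have hstart : (π none : ℕ) ≠ (π (some (I.i α)) : ℕ) := by
      intro h
      have : π none = π (some (I.i α)) := Fin.ext h
      simpa using π.injective this
    have spec : ∀ x : Option (Letter d), x ≠ some β →
        ((π' x : ℕ) = (π x : ℕ) ∧ (π x : ℕ) ≤ (π (some (I.i α)) : ℕ)) ∨
        ((π' x : ℕ) = (π x : ℕ) + 1 ∧ (π (some (I.i α)) : ℕ) < (π x : ℕ)) := by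
      intro x hx
      rcases le_or_gt (π x) (π (some (I.i α))) with h | h
      · exact Or.inl ⟨congrArg Fin.val (h4 x h), h⟩
      · exact Or.inr ⟨h6 x hx h, h⟩
    have hnβ : (none : Option (Letter d)) ≠ some β := fun h => by cases h
    have cmp : ∀ x : Option (Letter d), x ≠ some β → (π' x < π' none ↔ π x < π none) := by
      intro x hx
      rw [Fin.lt_def, Fin.lt_def]
      rcases spec x hx with ⟨e1, l1⟩ | ⟨e1, l1⟩ <;>
        rcases spec none hnβ with ⟨e2, l2⟩ | ⟨e2, l2⟩ <;> omega
    have cmpβ : (π' (some β) < π' none) ↔ (π (some (I.i α)) < π none) := by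
      rw [Fin.lt_def, Fin.lt_def]
      rcases spec none hnβ with ⟨e2, l2⟩ | ⟨e2, l2⟩ <;> omega
    funext x
    show vpi I π x + (if x = a.loser ∨ x = I.i a.loser then vpi I π a.winner else 0)
        = vpi I π' x
    rw [hwa, hla]
    have c1 : ¬ (π (some β) < π none) := by
      rw [hβl, Fin.lt_def]
      simp only [Fin.val_last]
      have := (π none).isLt
      omega
    have c2 : π (some α) < π none := by
      rw [hα0, Fin.lt_def]
      simp only [Fin.val_zero]
      omega
    by_cases hx1 : x = β
    · rw [hx1, if_pos (Or.inl rfl)]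
      have c3 := cmp (some (I.i β)) (fun h => I.nofix β (Option.some.inj h))
      unfold vpi
      simp only [cmpβ, c3]
      rw [if_neg c1, if_pos c2]
      ring
    · by_cases hx2 : x = I.i β
      · rw [hx2, if_pos (Or.inr rfl)]
        have c3 := cmp (some (I.i β)) (fun h => I.nofix β (Option.some.inj h))
        unfold vpi
        rw [I.invol β]
        simp only [cmpβ, c3]
        rw [if_neg c1, if_pos c2]
        ring
      · rw [if_neg (by rintro (h | h); exact hx1 h; exact hx2 h), add_zero]
        have d1 := cmp (some x) (fun h => hx1 (Option.some.inj h))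
        have d2 := cmp (some (I.i x)) (fun h => hx2 (by rw [← Option.some.inj h, I.invol]))
        unfold vpi
        simp only [d1, d2]
  · -- right operation: loser α at 0, winner β at last
    set π := a.src with hπdef
    set π' := a.dst with hπ'def
    have hwa : a.winner = β := Option.some.inj (π.injective (hw.trans hβl.symm))
    have hla : a.loser = α := Option.some.inj (π.injective (hl.trans hα0.symm))
    have hstar0 : (π none : ℕ) ≠ 0 := by
      intro h
      have : π none = π (some α) := by rw [hα0]; exact Fin.ext (by simpa using h)
      simpa using π.injective this
    have hstarlast : (π none : ℕ) ≠ 2*d := by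
      intro h
      have : π none = π (some β) := by rw [hβl]; exact Fin.ext (by simpa using h)
      simpa using π.injective this
    have hstart : (π none : ℕ) ≠ (π (some (I.i β)) : ℕ) := by
      intro h
      have : π none = π (some (I.i β)) := Fin.ext h
      simpa using π.injective this
    have spec : ∀ x : Option (Letter d), x ≠ some α →
        ((π' x : ℕ) = (π x : ℕ) ∧ (π (some (I.i β)) : ℕ) ≤ (π x : ℕ)) ∨
        ((π' x : ℕ) + 1 = (π x : ℕ) ∧ (π x : ℕ) < (π (some (I.i β)) : ℕ)) := by
      intro x hx
      rcases le_or_gt (π (some (I.i β))) (π x) with h | h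
      · exact Or.inl ⟨congrArg Fin.val (h4 x h), h⟩
      · exact Or.inr ⟨h6 x hx h, h⟩
    have hnα : (none : Option (Letter d)) ≠ some α := fun h => by cases h
    have cmp : ∀ x : Option (Letter d), x ≠ some α → (π' x < π' none ↔ π x < π none) := by
      intro x hx
      rw [Fin.lt_def, Fin.lt_def]
      rcases spec x hx with ⟨e1, l1⟩ | ⟨e1, l1⟩ <;>
        rcases spec none hnα with ⟨e2, l2⟩ | ⟨e2, l2⟩ <;> omega
    have cmpα : (π' (some α) < π' none) ↔ (π (some (I.i β)) < π none) := by
      rw [Fin.lt_def, Fin.lt_def]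
      rcases spec none hnα with ⟨e2, l2⟩ | ⟨e2, l2⟩ <;> omega
    funext x
    show vpi I π x + (if x = a.loser ∨ x = I.i a.loser then vpi I π a.winner else 0)
        = vpi I π' x
    rw [hwa, hla]
    have c1 : ¬ (π (some β) < π none) := by
      rw [hβl, Fin.lt_def]
      simp only [Fin.val_last]
      have := (π none).isLt
      omega
    have c2 : π (some α) < π none := by
      rw [hα0, Fin.lt_def]
      simp only [Fin.val_zero]
      omega
    by_cases hx1 : x = α
    · rw [hx1, if_pos (Or.inl rfl)]
      have c3 := cmp (some (I.i α)) (fun h => I.nofix α (Option.some.inj h))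
      unfold vpi
      simp only [cmpα, c3]
      rw [if_neg c1, if_pos c2]
      ring
    · by_cases hx2 : x = I.i α
      · rw [hx2, if_pos (Or.inr rfl)]
        have c3 := cmp (some (I.i α)) (fun h => I.nofix α (Option.some.inj h))
        unfold vpi
        rw [I.invol α]
        simp only [cmpα, c3]
        rw [if_neg c1, if_pos c2]
        ring
      · rw [if_neg (by rintro (h | h); exact hx1 h; exact hx2 h), add_zero]
        have d1 := cmp (some x) (fun h => hx1 (Option.some.inj h))
        have d2 := cmp (some (I.i x)) (fun h => hx2 (by rw [← Option.some.inj h, I.invol]))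
        unfold vpi
        simp only [d1, d2]

end Aux

section Aux2

variable {d : ℕ}

lemma arrow_adj (I : Inv d) (a : Arrow d I) (u v : Letter d → ℝ)
    (hu : Sym I u) (hv : Sym I v) :
    ∑ x, arrowB I a v x * arrowBtInv I a u x = ∑ x, v x * u x := by
  obtain ⟨hwl, hwil, hiwl, hiwil⟩ := winner_ne I a
  have key : ∀ x, arrowB I a v x * arrowBtInv I a u x
      = v x * u x + ((if x = a.loser then v a.winner * u a.loser else 0)
        + (if x = I.i a.loser then v a.winner * u a.loser else 0)
        - (if x = a.winner then v a.winner * u a.loser else 0)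
        - (if x = I.i a.winner then v a.winner * u a.loser else 0)) := by
    intro x
    unfold arrowB arrowBtInv
    by_cases e1 : x = a.loser
    · subst e1
      rw [if_pos (Or.inl rfl),
        if_neg (by rintro (h | h); exact hwl h.symm; exact hiwl h.symm),
        if_pos rfl, if_neg (fun h => I.nofix a.loser h.symm),
        if_neg (fun h => hwl h.symm), if_neg (fun h => hiwl h.symm)]
      ring
    · by_cases e2 : x = I.i a.loser
      · subst e2
        rw [if_pos (Or.inr rfl),
          if_neg (by
            rintro (h | h)
            · exact hwil (by rw [← h])
            · exact hwl (I.iinj h).symm),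
          if_neg (fun h => I.nofix a.loser h),
          if_pos rfl,
          if_neg (fun h => hwil (by rw [← h])),
          if_neg (fun h => hwl (I.iinj h).symm),
          hu a.loser]
        ring
      · by_cases e3 : x = a.winner
        · subst e3
          rw [if_neg (by rintro (h | h); exact hwl h; exact hwil h),
            if_pos (Or.inl rfl), if_neg (fun h => hwl h), if_neg (fun h => hwil h),
            if_pos rfl, if_neg (fun h => I.nofix a.winner h.symm)]
          ring
        · by_cases e4 : x = I.i a.winner
          · subst e4
            rw [if_neg (by rintro (h | h); exact hiwl h; exact hiwil h),
              if_pos (Or.inr rfl), if_neg (fun h => hiwl h), if_neg (fun h => hiwil h),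
              if_neg (fun h => I.nofix a.winner h), if_pos rfl,
              hv a.winner]
            ring
          · rw [if_neg (by rintro (h | h); exact e1 h; exact e2 h),
              if_neg (by rintro (h | h); exact e3 h; exact e4 h),
              if_neg e1, if_neg e2, if_neg e3, if_neg e4]
            ring
  calc ∑ x, arrowB I a v x * arrowBtInv I a u x
      = ∑ x, (v x * u x + ((if x = a.loser then v a.winner * u a.loser else 0)
        + (if x = I.i a.loser then v a.winner * u a.loser else 0)
        - (if x = a.winner then v a.winner * u a.loser else 0)
        - (if x = I.i a.winner then v a.winner * u a.loser else 0))) :=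
        Finset.sum_congr rfl fun x _ => key x
    _ = ∑ x, v x * u x := by
        rw [Finset.sum_add_distrib]
        have : ∑ x : Letter d, ((if x = a.loser then v a.winner * u a.loser else 0)
          + (if x = I.i a.loser then v a.winner * u a.loser else 0)
          - (if x = a.winner then v a.winner * u a.loser else 0)
          - (if x = I.i a.winner then v a.winner * u a.loser else 0)) = 0 := by
          simp only [sub_eq_add_neg, Finset.sum_add_distrib, Finset.sum_neg_distrib,
            Finset.sum_ite_eq', Finset.mem_univ, if_true]
          ring
        rw [this, add_zero]

lemma dot_vpi_eq (I : Inv d) (π : RPerm d) (v : Letter d → ℝ) (hv : Sym I v) :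
    ∑ x, vpi I π x * v x
      = 2 * ((∑ a ∈ univ.filter (fun a => π (some a) < π none), v a)
        - ∑ a ∈ univ.filter (fun a => π none < π (some a)), v a) := by
  have e : Letter d ≃ Letter d := ⟨I.i, I.i, I.invol, I.invol⟩
  have step1 : ∑ x, vpi I π x * v x
      = ∑ x, (if π (some x) < π none then (1:ℝ) else -1) * v x
        + ∑ x, (if π (some (I.i x)) < π none then (1:ℝ) else -1) * v x := by
    rw [← Finset.sum_add_distrib]
    refine Finset.sum_congr rfl fun x _ => ?_
    unfold vpi
    ring
  have step2 : ∑ x, (if π (some (I.i x)) < π none then (1:ℝ) else -1) * v x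
      = ∑ x, (if π (some x) < π none then (1:ℝ) else -1) * v x := by
    refine Fintype.sum_equiv ⟨I.i, I.i, I.invol, I.invol⟩ _ _ fun x => ?_
    show (if π (some (I.i x)) < π none then (1:ℝ) else -1) * v x
      = (if π (some (I.i x)) < π none then (1:ℝ) else -1) * v (I.i x)
    rw [hv]
  have hfilter : univ.filter (fun a : Letter d => ¬ π (some a) < π none)
      = univ.filter (fun a => π none < π (some a)) := by
    refine Finset.filter_congr fun x _ => ?_
    constructor
    · intro h
      refine lt_of_le_of_ne (not_lt.mp h) fun he => ?_
      cases π.injective he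
    · exact fun h => not_lt.mpr h.le
  have step3 : ∑ x, (if π (some x) < π none then (1:ℝ) else -1) * v x
      = (∑ a ∈ univ.filter (fun a => π (some a) < π none), v a)
        - ∑ a ∈ univ.filter (fun a => π none < π (some a)), v a := by
    rw [← Finset.sum_filter_add_sum_filter_not univ (fun a => π (some a) < π none)
      (fun x => (if π (some x) < π none then (1:ℝ) else -1) * v x), hfilter]
    have A : ∑ x ∈ univ.filter (fun a => π (some a) < π none),
        (if π (some x) < π none then (1:ℝ) else -1) * v x
        = ∑ a ∈ univ.filter (fun a => π (some a) < π none), v a :=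
      Finset.sum_congr rfl fun x hx => by
        rw [if_pos (Finset.mem_filter.mp hx).2, one_mul]
    have B : ∑ x ∈ univ.filter (fun a => π none < π (some a)),
        (if π (some x) < π none then (1:ℝ) else -1) * v x
        = ∑ a ∈ univ.filter (fun a => π none < π (some a)), -v a :=
      Finset.sum_congr rfl fun x hx => by
        rw [if_neg (not_lt.mpr (Finset.mem_filter.mp hx).2.le)]; ring
    rw [A, B, Finset.sum_neg_distrib, ← sub_eq_add_neg]
  rw [step1, step2, step3]
  ring

lemma balanced_of_dot (I : Inv d) (π : RPerm d) (v : Letter d → ℝ) (hv : Sym I v)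
    (h : ∑ x, vpi I π x * v x = 0) : Balanced π v := by
  have := dot_vpi_eq I π v hv
  rw [h] at this
  unfold Balanced
  linarith

lemma vpi_dot_pos (I : Inv d) (π : RPerm d) (h : Admissible I π) :
    0 < ∑ z, vpi I π z * vpi I π z := by
  obtain ⟨h1, _⟩ := h
  push_neg at h1
  obtain ⟨a, ha1, ha2⟩ := h1
  have ha3 : π (some (I.i a)) < π none := by
    refine lt_of_le_of_ne ha2 fun he => ?_
    cases π.injective he
  have hval : vpi I π a = 2 := by
    unfold vpi
    rw [if_pos ha1, if_pos ha3]
    norm_num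
  refine Finset.sum_pos' (fun i _ => mul_self_nonneg _) ⟨a, Finset.mem_univ a, ?_⟩
  rw [hval]
  norm_num

lemma main_ind (I : Inv d) (l : List (Arrow d I)) :
    ∀ (hne : l ≠ []) (_ : IsPathList I l) (π π' : RPerm d)
      (_ : (l.head hne).src = π) (_ : (l.getLast hne).dst = π'),
    pathB I l (vpi I π) = vpi I π' ∧
      ∀ u, Sym I u → ∑ x, vpi I π' x * pathBtInv I l u x = ∑ x, vpi I π x * u x := by
  induction l with
  | nil => intro hne; exact absurd rfl hne
  | cons a rest ih =>
    intro hne hpath π π' hs he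
    have hπ : π = a.src := hs.symm
    subst hπ
    rcases eq_or_ne rest [] with h | h
    · subst h
      have hπ' : π' = a.dst := he.symm
      subst hπ'
      constructor
      · show arrowB I a (vpi I a.src) = vpi I a.dst
        exact arrowB_vpi I a
      · intro u hu
        show ∑ x, vpi I a.dst x * arrowBtInv I a u x = _
        rw [← arrowB_vpi I a]
        exact arrow_adj I a u (vpi I a.src) hu (vpi_sym I a.src)
    · obtain ⟨b, t, rfl⟩ := List.exists_cons_of_ne_nil h
      unfold IsPathList at hpath
      rw [List.Chain', List.isChain_cons_cons] at hpath
      have hlast : ((b :: t).getLast (List.cons_ne_nil b t)).dst = π' := by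
        rw [← he]
        exact congrArg Arrow.dst (List.getLast_cons (List.cons_ne_nil b t)).symm
      obtain ⟨ih1, ih2⟩ := ih (List.cons_ne_nil b t) hpath.2 b.src π' rfl hlast
      constructor
      · show pathB I (b :: t) (arrowB I a (vpi I a.src)) = vpi I π'
        rw [arrowB_vpi I a, hpath.1, ih1]
      · intro u hu
        show ∑ x, vpi I π' x * pathBtInv I (b :: t) (arrowBtInv I a u) x = _
        rw [ih2 (arrowBtInv I a u) (sym_arrowBtInv I a hu), ← hpath.1, ← arrowB_vpi I a]
        exact arrow_adj I a u (vpi I a.src) hu (vpi_sym I a.src)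

end Aux2

/-- If `γ` is a path from `π` to `π'`, then `B_γ·v_π = v_{π'}`, and moreover
`(B*_γ)⁻¹·(v_π/⟨v_π,v_π⟩) − v_{π'}/⟨v_{π'},v_{π'}⟩` lies in `S_{π'}`.
Inner products of class vectors are computed as `⟨u,v⟩ = (Σ_x u x * v x)/2` in letter
coordinates. -/
theorem pathB_vpi_and_difference_in_S
    {d : ℕ} (I : Inv d) (l : List (Arrow d I)) (hne : l ≠ [])
    (hpath : IsPathList I l) (π π' : RPerm d)
    (hs : (l.head hne).src = π) (he : (l.getLast hne).dst = π') :
    pathB I l (vpi I π) = vpi I π' ∧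
      MemS I π' (fun x =>
        pathBtInv I l (fun y => vpi I π y / ((∑ z, vpi I π z * vpi I π z) / 2)) x
          - vpi I π' x / ((∑ z, vpi I π' z * vpi I π' z) / 2)) := by
  obtain ⟨h1, h2⟩ := main_ind I l hne hpath π π' hs he
  have hadmπ : Admissible I π := by rw [← hs]; exact arrow_src_adm I _
  have hadmπ' : Admissible I π' := by rw [← he]; exact arrow_dst_adm I _
  have hSpos := vpi_dot_pos I π hadmπ
  have hS'pos := vpi_dot_pos I π' hadmπ'
  have hdiv : ∀ T : ℝ, 0 < T → T / (T / 2) = 2 := fun T hT => by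
    rw [div_div_eq_mul_div, mul_comm, mul_div_assoc, div_self hT.ne', mul_one]
  have hu1 : Sym I (fun y => vpi I π y / ((∑ z, vpi I π z * vpi I π z) / 2)) := fun x => by
    simp only
    rw [vpi_sym]
  have hsym : Sym I (fun x =>
      pathBtInv I l (fun y => vpi I π y / ((∑ z, vpi I π z * vpi I π z) / 2)) x
        - vpi I π' x / ((∑ z, vpi I π' z * vpi I π' z) / 2)) := by
    intro x
    simp only
    rw [sym_pathBtInv I l hu1 x, vpi_sym]
  refine ⟨h1, hsym, ?_⟩
  apply balanced_of_dot I π' _ hsym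
  have hsplit : ∑ x, vpi I π' x *
      (pathBtInv I l (fun y => vpi I π y / ((∑ z, vpi I π z * vpi I π z) / 2)) x
        - vpi I π' x / ((∑ z, vpi I π' z * vpi I π' z) / 2))
      = (∑ x, vpi I π' x *
          pathBtInv I l (fun y => vpi I π y / ((∑ z, vpi I π z * vpi I π z) / 2)) x)
        - ∑ x, vpi I π' x * (vpi I π' x / ((∑ z, vpi I π' z * vpi I π' z) / 2)) := by
    rw [← Finset.sum_sub_distrib]
    exact Finset.sum_congr rfl fun x _ => by ring
  rw [hsplit, h2 _ hu1]
  have e1 : ∑ x, vpi I π x * (vpi I π x / ((∑ z, vpi I π z * vpi I π z) / 2))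
      = (∑ z, vpi I π z * vpi I π z) / ((∑ z, vpi I π z * vpi I π z) / 2) := by
    rw [show (∑ x, vpi I π x * (vpi I π x / ((∑ z, vpi I π z * vpi I π z) / 2)))
        = ∑ x, vpi I π x * vpi I π x / ((∑ z, vpi I π z * vpi I π z) / 2) from
      Finset.sum_congr rfl fun x _ => by ring, ← Finset.sum_div]
  have e2 : ∑ x, vpi I π' x * (vpi I π' x / ((∑ z, vpi I π' z * vpi I π' z) / 2))
      = (∑ z, vpi I π' z * vpi I π' z) / ((∑ z, vpi I π' z * vpi I π' z) / 2) := by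
    rw [show (∑ x, vpi I π' x * (vpi I π' x / ((∑ z, vpi I π' z * vpi I π' z) / 2)))
        = ∑ x, vpi I π' x * vpi I π' x / ((∑ z, vpi I π' z * vpi I π' z) / 2) from
      Finset.sum_congr rfl fun x _ => by ring, ← Finset.sum_div]
  rw [e1, e2, hdiv _ hSpos, hdiv _ hS'pos]
  ring

end Rauzy
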